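/- Let α ∈ ℝ and let T : (ℝ/ℤ)² → (ℝ/ℤ)² be defined by T(x, y) = (x + α, y + x). Then for every ε > 0 there exists an open set U ⊆ (ℝ/ℤ)² containing (0,0) such that {n ∈ ℤ : Tⁿ(0,0) ∈ U} ⊆ {n ∈ ℤ : ‖n²α‖ < ε}. -/

import Mathlib

/-- The skew product transformation `T(x, y) = (x + α, y + x)` of the 2-torus
`(ℝ/ℤ)²`, as a bijection (so that iterates `Tⁿ` make sense for all `n : ℤ`). -/
noncomputable def skewT (α : ℝ) : Equiv.Perm (AddCircle (1 : ℝ) × AddCircle (1 : ℝ)) where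
  toFun p := (p.1 + (α : AddCircle (1 : ℝ)), p.2 + p.1)
  invFun p := (p.1 - (α : AddCircle (1 : ℝ)), p.2 - p.1 + (α : AddCircle (1 : ℝ)))
  left_inv := by
    rintro ⟨x, y⟩
    simp only [Prod.mk.injEq]
    constructor <;> abel
  right_inv := by
    rintro ⟨x, y⟩
    simp only [Prod.mk.injEq]
    constructor <;> abel

lemma skewT_apply (α : ℝ) (p : AddCircle (1 : ℝ) × AddCircle (1 : ℝ)) :
    skewT α p = (p.1 + (α : AddCircle (1 : ℝ)), p.2 + p.1) := rfl

lemma skewT_symm_apply (α : ℝ) (p : AddCircle (1 : ℝ) × AddCircle (1 : ℝ)) :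
    (skewT α)⁻¹ p = (p.1 - (α : AddCircle (1 : ℝ)), p.2 - p.1 + (α : AddCircle (1 : ℝ))) := rfl

lemma skewT_iter (α : ℝ) (n : ℤ) :
    (skewT α ^ n) ((0, 0) : AddCircle (1 : ℝ) × AddCircle (1 : ℝ)) =
      ((((n : ℝ) * α : ℝ) : AddCircle (1 : ℝ)),
       ((((n : ℝ) * ((n : ℝ) - 1) / 2 * α : ℝ)) : AddCircle (1 : ℝ))) := by
  induction n using Int.induction_on with
  | zero => simp
  | succ n ih =>
      have h : (skewT α ^ ((n : ℤ) + 1)) ((0, 0) : AddCircle (1 : ℝ) × AddCircle (1 : ℝ))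
          = skewT α ((skewT α ^ (n : ℤ)) (0, 0)) := by
        rw [add_comm, zpow_add, zpow_one, Equiv.Perm.mul_apply]
      rw [h, ih, skewT_apply]
      refine Prod.ext ?_ ?_ <;> simp only
      · rw [← QuotientAddGroup.mk_add]
        push_cast
        ring_nf
      · rw [← QuotientAddGroup.mk_add]
        push_cast
        ring_nf
  | pred n ih =>
      have h : (skewT α ^ (-(n : ℤ) - 1)) ((0, 0) : AddCircle (1 : ℝ) × AddCircle (1 : ℝ))
          = (skewT α)⁻¹ ((skewT α ^ (-(n : ℤ))) (0, 0)) := by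
        rw [sub_eq_add_neg, add_comm, zpow_add, zpow_neg_one, Equiv.Perm.mul_apply]
      rw [h, ih, skewT_symm_apply]
      refine Prod.ext ?_ ?_ <;> simp only
      · rw [← QuotientAddGroup.mk_sub]
        push_cast
        ring_nf
      · rw [← QuotientAddGroup.mk_sub, ← QuotientAddGroup.mk_add]
        push_cast
        ring_nf

/-- For every `ε > 0` there is an open set `U ⊆ (ℝ/ℤ)²` containing `(0,0)` such that
`{n : ℤ | Tⁿ(0,0) ∈ U} ⊆ {n : ℤ | ‖n²α‖ < ε}`, where `T(x,y) = (x + α, y + x)` and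
`‖x‖` is the distance from `x` to the nearest integer (the norm on `ℝ/ℤ`). -/
theorem skewT_orbit_near_zero_subset (α : ℝ) (ε : ℝ) (hε : 0 < ε) :
    ∃ U : Set (AddCircle (1 : ℝ) × AddCircle (1 : ℝ)),
      IsOpen U ∧ ((0, 0) : AddCircle (1 : ℝ) × AddCircle (1 : ℝ)) ∈ U ∧
      { n : ℤ | (skewT α ^ n) ((0, 0) : AddCircle (1 : ℝ) × AddCircle (1 : ℝ)) ∈ U } ⊆
        { n : ℤ | ‖(((n : ℝ) ^ 2 * α : ℝ) : AddCircle (1 : ℝ))‖ < ε } := by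
  refine ⟨{p | ‖p.1‖ < ε / 3} ∩ {p | ‖p.2‖ < ε / 3}, ?_, ?_, ?_⟩
  · exact (isOpen_lt (continuous_norm.comp continuous_fst) continuous_const).inter
      (isOpen_lt (continuous_norm.comp continuous_snd) continuous_const)
  · have h3 : (0:ℝ) < ε / 3 := by linarith
    exact ⟨by simpa using h3, by simpa using h3⟩
  · intro n hn
    rw [Set.mem_setOf_eq, skewT_iter] at hn
    obtain ⟨h1, h2⟩ := hn
    simp only [Set.mem_setOf_eq] at h1 h2 ⊢
    have key : (((n : ℝ) ^ 2 * α : ℝ) : AddCircle (1 : ℝ)) =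
        (((n : ℝ) * ((n : ℝ) - 1) / 2 * α : ℝ) : AddCircle (1 : ℝ)) +
        (((n : ℝ) * ((n : ℝ) - 1) / 2 * α : ℝ) : AddCircle (1 : ℝ)) +
        (((n : ℝ) * α : ℝ) : AddCircle (1 : ℝ)) := by
      rw [← QuotientAddGroup.mk_add, ← QuotientAddGroup.mk_add]
      congr 1
      ring
    calc ‖(((n : ℝ) ^ 2 * α : ℝ) : AddCircle (1 : ℝ))‖
        ≤ ‖(((n : ℝ) * ((n : ℝ) - 1) / 2 * α : ℝ) : AddCircle (1 : ℝ))‖ +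
          ‖(((n : ℝ) * ((n : ℝ) - 1) / 2 * α : ℝ) : AddCircle (1 : ℝ))‖ +
          ‖(((n : ℝ) * α : ℝ) : AddCircle (1 : ℝ))‖ := by
            rw [key]; exact (norm_add_le _ _).trans (by gcongr; exact norm_add_le _ _)
      _ < ε := by linarith
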